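/- The algebra P_n satisfies the identity (ab)a = 0 for all a,b in P_n. -/

import Mathlib

inductive PBasis (n : ℕ) : Type
  | a : Fin n → Fin n → PBasis n
  | b : Fin n → Fin n → PBasis n
  | c : Fin n → PBasis n
  | d : Fin n → Fin n → PBasis n
  | e : Fin n → Fin n → PBasis n
  deriving DecidableEq

abbrev Pn (F : Type*) [Field F] (n : ℕ) : Type _ := PBasis n →₀ F

open PBasis in
noncomputable def mulB (F : Type*) [Field F] {n : ℕ} : PBasis n → PBasis n → Pn F n
  | a i j, c k => if k = i then Finsupp.single (d i j) 1 else 0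
  | b i j, c k => if k = i then Finsupp.single (e i j) 1 else 0
  | a i j, e k l => if i = k ∧ j = l then Finsupp.single (c j) 1 else 0
  | e k l, a i j => if i = k ∧ j = l then Finsupp.single (c j) 1 else 0
  | b i j, d k l => if i = k ∧ j = l then -Finsupp.single (c j) 1 else 0
  | d k l, b i j => if i = k ∧ j = l then -Finsupp.single (c j) 1 else 0
  | _, _ => 0

noncomputable def mulLin (F : Type*) [Field F] {n : ℕ} :
    Pn F n →ₗ[F] Pn F n →ₗ[F] Pn F n :=
  Finsupp.lift (Pn F n →ₗ[F] Pn F n) F (PBasis n)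
    (fun u => Finsupp.lift (Pn F n) F (PBasis n) (fun v => mulB F u v))

noncomputable instance (F : Type*) [Field F] (n : ℕ) : Mul (Pn F n) :=
  ⟨fun x y => mulLin F x y⟩


lemma mulLin_single (F : Type*) [Field F] {n : ℕ} (u v : PBasis n) (r s : F) :
    mulLin F (Finsupp.single u r) (Finsupp.single v s) = (r * s) • mulB F u v := by
  simp [mulLin, Finsupp.lift_apply, Finsupp.sum_single_index, smul_smul, mul_comm]

set_option maxHeartbeats 1000000 in
lemma keyd (F : Type*) [Field F] {n : ℕ} (u v : PBasis n) :
    mulLin F (mulB F u v) (Finsupp.single u (1:F)) = 0 := by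
  cases u <;> cases v <;>
    simp only [mulB, map_zero, LinearMap.zero_apply] <;>
    (try (split_ifs <;> simp_all [mulLin_single, mulB])) <;>
    (try (intros; simp_all)) <;>
    (try (split_ifs <;> simp_all))

set_option maxHeartbeats 2000000 in
lemma keyc (F : Type*) [Field F] {n : ℕ} (u v w : PBasis n) :
    mulLin F (mulB F u v) (Finsupp.single w (1:F)) +
      mulLin F (mulB F w v) (Finsupp.single u 1) = 0 := by
  cases u <;> cases v <;> cases w <;>
    simp only [mulB, map_zero, LinearMap.zero_apply, zero_add, add_zero] <;>
    (try (split_ifs <;> simp_all [mulLin_single, mulB])) <;>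
    (try (intros; simp_all)) <;>
    (try (split_ifs <;> simp_all))

lemma diag (F : Type*) [Field F] {n : ℕ} (u v : PBasis n) (r s : F) :
    mulLin F (mulLin F (Finsupp.single u r) (Finsupp.single v s)) (Finsupp.single u r) = 0 := by
  have h := keyd F u v
  rw [mulLin_single, map_smul, ← Finsupp.smul_single_one u r, map_smul]
  simp [LinearMap.smul_apply, h]

lemma cross (F : Type*) [Field F] {n : ℕ} (v : PBasis n) (s : F) (z w : Pn F n) :
    mulLin F (mulLin F w (Finsupp.single v s)) z
      + mulLin F (mulLin F z (Finsupp.single v s)) w = 0 := by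
  induction w using Finsupp.induction_linear with
  | zero => simp
  | add f g hf hg =>
    have : mulLin F (mulLin F (f + g) (Finsupp.single v s)) z
        + mulLin F (mulLin F z (Finsupp.single v s)) (f + g)
        = (mulLin F (mulLin F f (Finsupp.single v s)) z
            + mulLin F (mulLin F z (Finsupp.single v s)) f)
        + (mulLin F (mulLin F g (Finsupp.single v s)) z
            + mulLin F (mulLin F z (Finsupp.single v s)) g) := by
      simp only [map_add, LinearMap.add_apply]; abel
    rw [this, hf, hg, add_zero]
  | single u r =>
    induction z using Finsupp.induction_linear with
    | zero => simp
    | add f g hf hg =>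
      have : mulLin F (mulLin F (Finsupp.single u r) (Finsupp.single v s)) (f + g)
          + mulLin F (mulLin F (f + g) (Finsupp.single v s)) (Finsupp.single u r)
          = (mulLin F (mulLin F (Finsupp.single u r) (Finsupp.single v s)) f
              + mulLin F (mulLin F f (Finsupp.single v s)) (Finsupp.single u r))
          + (mulLin F (mulLin F (Finsupp.single u r) (Finsupp.single v s)) g
              + mulLin F (mulLin F g (Finsupp.single v s)) (Finsupp.single u r)) := by
        simp only [map_add, LinearMap.add_apply]; abel
      rw [this, hf, hg, add_zero]
    | single w t =>
      have h := keyc F u v w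
      have h2 : mulLin F (mulB F w v) (Finsupp.single u 1)
          = - mulLin F (mulB F u v) (Finsupp.single w 1) :=
        eq_neg_of_add_eq_zero_right h
      rw [mulLin_single, mulLin_single, map_smul, map_smul,
        ← Finsupp.smul_single_one w t, ← Finsupp.smul_single_one u r,
        map_smul, map_smul]
      simp only [LinearMap.smul_apply, h2, smul_neg, smul_smul]
      rw [show t * (r * s) = r * (t * s) by ring]
      exact add_neg_cancel _

theorem stmt (F : Type*) [Field F] (n : ℕ) :
    ∀ x y : Pn F n, (x * y) * x = 0 := by
  intro x y
  show mulLin F (mulLin F x y) x = 0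
  induction y using Finsupp.induction_linear with
  | zero => simp
  | add f g hf hg => rw [map_add, map_add, LinearMap.add_apply, hf, hg, add_zero]
  | single v s =>
    induction x using Finsupp.induction with
    | zero => simp
    | single_add u r f hu hr ih =>
      have expand : mulLin F (mulLin F (Finsupp.single u r + f) (Finsupp.single v s))
            (Finsupp.single u r + f)
          = mulLin F (mulLin F (Finsupp.single u r) (Finsupp.single v s)) (Finsupp.single u r)
          + (mulLin F (mulLin F f (Finsupp.single v s)) (Finsupp.single u r)
              + mulLin F (mulLin F (Finsupp.single u r) (Finsupp.single v s)) f)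
          + mulLin F (mulLin F f (Finsupp.single v s)) f := by
        simp only [map_add, LinearMap.add_apply]; abel
      rw [expand, diag, cross, ih, zero_add, add_zero]
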